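/- arXiv:2408.00618 — 3 statements merged into one kernel-verified Lean document; each statement's English description precedes it below -/
import Mathlib

section
/- Let y ∈ ℝⁿ, x ∈ ℝⁿ, and r : {1,…,n} → {1,…,L} with all group counts n_ℓ positive, sample proportions π̂_ℓ = n_ℓ/n, group means x̄_ℓ = n_ℓ^{-1} ∑_{i : r(i)=ℓ} x_i, and group sample variances σ̂²_{x[ℓ]} = n_ℓ^{-1} ∑_{i : r(i)=ℓ} x_i² − x̄_ℓ². Assume the equal-variance condition σ̂²_{x[ℓ]} = σ̂²_{x[1]} for all ℓ. Let X^M = [1, x, Z] with constraint matrix A^M encoding the ABC ∑_ℓ π̂_ℓ β_ℓ = 0, and let X = [1, x, Z, D_x Z] (where D_x = diag(x), so D_x Z contains the columnwise products of x with the group indicators) with constraint matrix A encoding both ∑_ℓ π̂_ℓ β_ℓ = 0 and ∑_ℓ π̂_ℓ γ_ℓ = 0. Let V^M and V be the covariance factors of the two constrained models (assumed to exist), let j be the coordinate of α₁ (the coefficient on x), and let Ŝ_M, Ŝ > 0 be residual scales with Ŝ ≤ Ŝ_M. Then the standard error of the main x-effect under the cat-modified model is no larger than under the main-only model: Ŝ·√(V_{jj})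 ≤ Ŝ_M·√(V^M_{jj}). -/
open Finset Matrix

noncomputable section

/-- The (scaled) sample variance of `x` within group `ℓ` of the categorical covariate `r`:
`σ̂²_{x[ℓ]} = n_ℓ⁻¹ ∑_{i : r i = ℓ} x i ^ 2 − x̄_ℓ ^ 2`. -/
def groupVar {n L : ℕ} (x : Fin n → ℝ) (r : Fin n → Fin L) (ℓ : Fin L) : ℝ :=
  (∑ i ∈ univ.filter (fun i : Fin n => r i = ℓ), x i ^ 2) /
      ((univ.filter (fun i : Fin n => r i = ℓ)).card : ℝ) -
    ((∑ i ∈ univ.filter (fun i : Fin n => r i = ℓ), x i) /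
      ((univ.filter (fun i : Fin n => r i = ℓ)).card : ℝ)) ^ 2

/-- Main-only ANCOVA design matrix `[1, x, Z]`. -/
def designMain {n L : ℕ} (x : Fin n → ℝ) (r : Fin n → Fin L) :
    Matrix (Fin n) (Unit ⊕ Unit ⊕ Fin L) ℝ :=
  Matrix.of fun i j =>
    match j with
    | Sum.inl _ => 1
    | Sum.inr (Sum.inl _) => x i
    | Sum.inr (Sum.inr ℓ) => if r i = ℓ then 1 else 0

/-- Cat-modified design matrix `[1, x, Z, D_x Z]`, where `D_x Z` consists of the
columnwise products of `x` with the group indicators. -/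
def designCat {n L : ℕ} (x : Fin n → ℝ) (r : Fin n → Fin L) :
    Matrix (Fin n) ((Unit ⊕ Unit ⊕ Fin L) ⊕ Fin L) ℝ :=
  Matrix.of fun i j =>
    match j with
    | Sum.inl j' => designMain x r i j'
    | Sum.inr ℓ => if r i = ℓ then x i else 0

/-- Constraint matrix encoding the abundance-based constraint `∑_ℓ π̂_ℓ β_ℓ = 0`. -/
def constrMain {n L : ℕ} (r : Fin n → Fin L) :
    Matrix (Fin 1) (Unit ⊕ Unit ⊕ Fin L) ℝ :=
  Matrix.of fun _ j =>
    match j with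
    | Sum.inr (Sum.inr ℓ) => ((univ.filter (fun i : Fin n => r i = ℓ)).card : ℝ) / n
    | _ => 0

/-- Constraint matrix encoding the abundance-based constraints `∑_ℓ π̂_ℓ β_ℓ = 0` and
`∑_ℓ π̂_ℓ γ_ℓ = 0`. -/
def constrCat {n L : ℕ} (r : Fin n → Fin L) :
    Matrix (Fin 2) ((Unit ⊕ Unit ⊕ Fin L) ⊕ Fin L) ℝ :=
  Matrix.of fun k j =>
    if k = 0 then
      match j with
      | Sum.inl (Sum.inr (Sum.inr ℓ)) =>
        ((univ.filter (fun i : Fin n => r i = ℓ)).card : ℝ) / n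
      | _ => 0
    else
      match j with
      | Sum.inr ℓ => ((univ.filter (fun i : Fin n => r i = ℓ)).card : ℝ) / n
      | _ => 0


/-! ### Auxiliary machinery -/

/-- group count as a real -/
def gN {n L : ℕ} (r : Fin n → Fin L) (ℓ : Fin L) : ℝ :=
  ((univ.filter (fun i : Fin n => r i = ℓ)).card : ℝ)

/-- group mean -/
def gm {n L : ℕ} (x : Fin n → ℝ) (r : Fin n → Fin L) (ℓ : Fin L) : ℝ :=
  (∑ i ∈ univ.filter (fun i : Fin n => r i = ℓ), x i) / gN r ℓ

/-- candidate solution vector for the main-only model -/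
def thetaM {n L : ℕ} (x : Fin n → ℝ) (r : Fin n → Fin L) (c : ℝ) :
    Unit ⊕ Unit ⊕ Fin L → ℝ :=
  Sum.elim (fun _ => -(c * ((∑ i, x i) / n)))
    (Sum.elim (fun _ => c) (fun ℓ => c * ((∑ i, x i) / n - gm x r ℓ)))

/-- candidate solution vector for the cat-modified model -/
def thetaC {n L : ℕ} (x : Fin n → ℝ) (r : Fin n → Fin L) (c : ℝ) :
    (Unit ⊕ Unit ⊕ Fin L) ⊕ Fin L → ℝ :=
  Sum.elim (thetaM x r c) (fun _ => 0)

lemma mulVec_eq_zero_of_isUnit_det {d : Type*} [Fintype d] [DecidableEq d]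
    (M : Matrix d d ℝ) (h : IsUnit M.det) {w : d → ℝ} (hw : M.mulVec w = 0) : w = 0 := by
  have := congrArg (M⁻¹.mulVec ·) hw
  simpa [Matrix.mulVec_mulVec, Matrix.nonsing_inv_mul _ h] using this

lemma key_entry {P d m' n' : Type*} [Fintype P] [DecidableEq P] [Fintype d] [DecidableEq d]
    [Fintype m'] [Fintype n']
    (X : Matrix n' P ℝ) (A : Matrix m' P ℝ) (Q : Matrix P d ℝ)
    (hnull : ∀ θ : P → ℝ, A.mulVec θ = 0 ↔ ∃ w, θ = Q.mulVec w)
    (hG : IsUnit ((X*Q)ᵀ*(X*Q)).det)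
    (j : P) (θ : P → ℝ) (μ : m' → ℝ)
    (hθA : A.mulVec θ = 0)
    (heq : Xᵀ.mulVec (X.mulVec θ) = Pi.single j 1 + Aᵀ.mulVec μ) :
    (Q * ((X*Q)ᵀ*(X*Q))⁻¹ * Qᵀ) j j = θ j := by
  obtain ⟨w, rfl⟩ := (hnull θ).mp hθA
  set G := (X*Q)ᵀ*(X*Q) with hGdef
  have hAQ : A * Q = 0 := by
    ext k l
    have h0 : A.mulVec (Q.mulVec (Pi.single l 1)) = 0 := (hnull _).mpr ⟨_, rfl⟩
    have := congrFun h0 k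
    rw [Matrix.mulVec_mulVec] at this
    simpa [Matrix.mulVec_mulVec, Matrix.mulVec_single] using this
  have hQA : Qᵀ.mulVec (Aᵀ.mulVec μ) = 0 := by
    rw [Matrix.mulVec_mulVec, ← Matrix.transpose_mul, hAQ]
    simp
  have hGw : G.mulVec w = Qᵀ.mulVec (Pi.single j 1) := by
    have h1 := congrArg (Qᵀ.mulVec ·) heq
    simp only [Matrix.mulVec_add, hQA, add_zero, Matrix.mulVec_mulVec] at h1
    have h2 : Qᵀ * (Xᵀ * (X * Q)) = G := by
      rw [hGdef, Matrix.transpose_mul, Matrix.mul_assoc]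
    rw [h2] at h1
    simpa [Matrix.mulVec_mulVec] using h1
  have hw : w = (G⁻¹ * Qᵀ).mulVec (Pi.single j 1) := by
    rw [← Matrix.mulVec_mulVec, ← hGw, Matrix.mulVec_mulVec, Matrix.nonsing_inv_mul _ hG,
      Matrix.one_mulVec]
  have h3 : Q.mulVec w = (Q * G⁻¹ * Qᵀ).mulVec (Pi.single j 1) := by
    rw [hw, Matrix.mulVec_mulVec, Matrix.mul_assoc]
  rw [h3, Matrix.mulVec_single]
  simp

section facts
variable {n L : ℕ} (x : Fin n → ℝ) (r : Fin n → Fin L)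
  (hcount : ∀ ℓ : Fin L, 0 < (univ.filter (fun i : Fin n => r i = ℓ)).card)

include hcount

lemma gN_pos (ℓ : Fin L) : 0 < gN r ℓ := by
  rw [gN]; exact_mod_cast hcount ℓ

lemma sum_x_group (ℓ : Fin L) :
    ∑ i ∈ univ.filter (fun i : Fin n => r i = ℓ), x i = gN r ℓ * gm x r ℓ := by
  rw [gm, mul_div_cancel₀]
  exact (gN_pos r hcount ℓ).ne'

omit hcount in
lemma sum_gN : ∑ ℓ, gN r ℓ = (n : ℝ) := by
  have h := Finset.card_eq_sum_card_fiberwise (f := r) (s := univ) (t := univ)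
    (fun i _ => mem_univ (r i))
  have hn : (univ : Finset (Fin n)).card = n := by simp
  rw [hn] at h
  simp only [gN]
  rw [← Nat.cast_sum, ← h]

lemma sum_gNm : ∑ ℓ, gN r ℓ * gm x r ℓ = ∑ i, x i := by
  rw [← Finset.sum_fiberwise univ r x]
  exact Finset.sum_congr rfl fun ℓ _ => (sum_x_group x r hcount ℓ).symm

variable (hL : 0 < L) (heqvar : ∀ ℓ : Fin L, groupVar x r ℓ = groupVar x r ⟨0, hL⟩)
include heqvar

lemma sum_x2_group (ℓ : Fin L) :
    ∑ i ∈ univ.filter (fun i : Fin n => r i = ℓ), x i ^ 2 =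
      gN r ℓ * (groupVar x r ⟨0, hL⟩ + gm x r ℓ ^ 2) := by
  have h := heqvar ℓ
  rw [groupVar] at h
  have hNne : gN r ℓ ≠ 0 := (gN_pos r hcount ℓ).ne'
  have h2 : (∑ i ∈ univ.filter (fun i : Fin n => r i = ℓ), x i ^ 2) / gN r ℓ =
      groupVar x r ⟨0, hL⟩ + gm x r ℓ ^ 2 := by
    rw [← h, gm, gN]; ring
  field_simp at h2
  linarith [h2]

omit heqvar in
lemma sum_centered_group (ℓ : Fin L) :
    ∑ i ∈ univ.filter (fun i : Fin n => r i = ℓ), (x i - gm x r ℓ) = 0 := by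
  rw [Finset.sum_sub_distrib, sum_x_group x r hcount ℓ, Finset.sum_const, nsmul_eq_mul]
  rw [show ((univ.filter (fun i : Fin n => r i = ℓ)).card : ℝ) = gN r ℓ from rfl]
  ring

lemma sum_x_centered_group (ℓ : Fin L) :
    ∑ i ∈ univ.filter (fun i : Fin n => r i = ℓ), x i * (x i - gm x r ℓ) =
      gN r ℓ * groupVar x r ⟨0, hL⟩ := by
  have h2 := sum_x2_group x r hcount hL heqvar ℓ
  have h1 := sum_x_group x r hcount ℓ
  have he : ∑ i ∈ univ.filter (fun i : Fin n => r i = ℓ), x i * (x i - gm x r ℓ) =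
      (∑ i ∈ univ.filter (fun i : Fin n => r i = ℓ), x i ^ 2) -
        gm x r ℓ * ∑ i ∈ univ.filter (fun i : Fin n => r i = ℓ), x i := by
    rw [Finset.mul_sum, ← Finset.sum_sub_distrib]
    exact Finset.sum_congr rfl fun i _ => by ring
  rw [he, h1, h2]; ring

lemma sq_centered_group (ℓ : Fin L) :
    ∑ i ∈ univ.filter (fun i : Fin n => r i = ℓ), (x i - gm x r ℓ) ^ 2 =
      gN r ℓ * groupVar x r ⟨0, hL⟩ := by
  have h2 := sum_x2_group x r hcount hL heqvar ℓ
  have h1 := sum_x_group x r hcount ℓ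
  have he : ∑ i ∈ univ.filter (fun i : Fin n => r i = ℓ), (x i - gm x r ℓ) ^ 2 =
      (∑ i ∈ univ.filter (fun i : Fin n => r i = ℓ), x i ^ 2) -
        2 * gm x r ℓ * (∑ i ∈ univ.filter (fun i : Fin n => r i = ℓ), x i) +
        ((univ.filter (fun i : Fin n => r i = ℓ)).card : ℝ) * gm x r ℓ ^ 2 := by
    calc ∑ i ∈ univ.filter (fun i : Fin n => r i = ℓ), (x i - gm x r ℓ) ^ 2
        = ∑ i ∈ univ.filter (fun i : Fin n => r i = ℓ),
            (x i ^ 2 - 2 * gm x r ℓ * x i + gm x r ℓ ^ 2) :=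
          Finset.sum_congr rfl (fun i _ => by ring)
      _ = _ := by
          rw [Finset.sum_add_distrib, Finset.sum_sub_distrib, ← Finset.mul_sum,
            Finset.sum_const, nsmul_eq_mul]
  rw [he, h1, h2,
    show ((univ.filter (fun i : Fin n => r i = ℓ)).card : ℝ) = gN r ℓ from rfl]
  ring

omit heqvar in
lemma sum_centered : ∑ i, (x i - gm x r (r i)) = 0 := by
  rw [← Finset.sum_fiberwise univ r (fun i => x i - gm x r (r i))]
  refine Finset.sum_eq_zero fun ℓ _ => ?_
  rw [← sum_centered_group x r hcount ℓ]
  refine Finset.sum_congr rfl fun i hi => ?_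
  rw [(Finset.mem_filter.mp hi).2]

lemma sum_x_centered :
    ∑ i, x i * (x i - gm x r (r i)) = (n : ℝ) * groupVar x r ⟨0, hL⟩ := by
  rw [← Finset.sum_fiberwise univ r (fun i => x i * (x i - gm x r (r i)))]
  rw [← sum_gN (r := r), Finset.sum_mul]
  refine Finset.sum_congr rfl fun ℓ _ => ?_
  rw [← sum_x_centered_group x r hcount hL heqvar ℓ]
  refine Finset.sum_congr rfl fun i hi => ?_
  rw [(Finset.mem_filter.mp hi).2]

omit hcount heqvar

lemma designMain_mulVec_thetaM (c : ℝ) :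
    (designMain x r).mulVec (thetaM x r c) = fun i => c * (x i - gm x r (r i)) := by
  funext i
  simp only [Matrix.mulVec, dotProduct, Fintype.sum_sum_type, designMain, thetaM,
    Matrix.of_apply, Sum.elim_inl, Sum.elim_inr, Finset.univ_unique, Finset.sum_singleton,
    ite_mul, one_mul, zero_mul, Finset.sum_ite_eq, Finset.mem_univ, if_true]
  ring

lemma designCat_mulVec_thetaC (c : ℝ) :
    (designCat x r).mulVec (thetaC x r c) = fun i => c * (x i - gm x r (r i)) := by
  funext i
  simp only [Matrix.mulVec, dotProduct, Fintype.sum_sum_type, designCat, designMain,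
    thetaC, thetaM, Matrix.of_apply, Sum.elim_inl, Sum.elim_inr, Finset.univ_unique,
    Finset.sum_singleton, ite_mul, one_mul, zero_mul, mul_zero, Finset.sum_ite_eq,
    Finset.mem_univ, if_true, Finset.sum_const_zero, add_zero]
  ring

lemma constrMain_mulVec_thetaM (c : ℝ)
    (hdev : ∑ ℓ, gN r ℓ * ((∑ i, x i) / n - gm x r ℓ) = 0) :
    (constrMain r).mulVec (thetaM x r c) = 0 := by
  funext k
  simp only [Matrix.mulVec, dotProduct, Fintype.sum_sum_type, constrMain, thetaM,
    Matrix.of_apply, Sum.elim_inl, Sum.elim_inr, Finset.univ_unique, Finset.sum_singleton,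
    Pi.zero_apply, zero_mul, mul_neg, neg_zero, zero_add, mul_zero]
  calc ∑ ℓ, (gN r ℓ / n) * (c * ((∑ i, x i) / n - gm x r ℓ))
      = (c / n) * ∑ ℓ, gN r ℓ * ((∑ i, x i) / n - gm x r ℓ) := by
        rw [Finset.mul_sum]; exact Finset.sum_congr rfl fun ℓ _ => by ring
    _ = 0 := by rw [hdev, mul_zero]

lemma constrCat_mulVec_thetaC (c : ℝ)
    (hdev : ∑ ℓ, gN r ℓ * ((∑ i, x i) / n - gm x r ℓ) = 0) :
    (constrCat r).mulVec (thetaC x r c) = 0 := by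
  funext k
  fin_cases k <;>
    simp only [Matrix.mulVec, dotProduct, Fintype.sum_sum_type, constrCat, thetaC, thetaM,
      Matrix.of_apply, Sum.elim_inl, Sum.elim_inr, Finset.univ_unique, Finset.sum_singleton,
      Pi.zero_apply, zero_mul, mul_neg, neg_zero, zero_add, mul_zero, add_zero,
      Finset.sum_const_zero, if_true, if_false, Fin.mk_zero, Fin.mk_one, one_ne_zero,
      reduceIte]
  calc ∑ ℓ, (gN r ℓ / n) * (c * ((∑ i, x i) / n - gm x r ℓ))
      = (c / n) * ∑ ℓ, gN r ℓ * ((∑ i, x i) / n - gm x r ℓ) := by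
        rw [Finset.mul_sum]; exact Finset.sum_congr rfl fun ℓ _ => by ring
    _ = 0 := by rw [hdev, mul_zero]

end facts

/-- Theorem 7: the standard error of the main `x`-effect does not
increase when the categorical-continuous interaction is added under ABCs.  Under the
equal-variance condition, with `QM` and `Q` having orthonormal columns spanning the
null spaces of the respective constraint matrices, the reparametrized designs of full
column rank (so the covariance factors exist), and residual scales `S ≤ SM`, the
standard error of the coefficient on `x` in the cat-modified model is no larger than in
the main-only model. -/
theorem abc_ancova_se_decrease
    {n L : ℕ} (hL : 0 < L) (dM d : ℕ)
    (x : Fin n → ℝ) (r : Fin n → Fin L)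
    (hcount : ∀ ℓ : Fin L, 0 < (univ.filter (fun i : Fin n => r i = ℓ)).card)
    -- equal-variance condition
    (heqvar : ∀ ℓ : Fin L, groupVar x r ℓ = groupVar x r ⟨0, hL⟩)
    (QM : Matrix (Unit ⊕ Unit ⊕ Fin L) (Fin dM) ℝ)
    (Q : Matrix ((Unit ⊕ Unit ⊕ Fin L) ⊕ Fin L) (Fin d) ℝ)
    -- orthonormal columns
    (hQMorth : QMᵀ * QM = 1)
    (hQorth : Qᵀ * Q = 1)
    -- the columns span the null spaces of the constraint matrices
    (hQMnull : ∀ θ : (Unit ⊕ Unit ⊕ Fin L) → ℝ,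
      (constrMain r).mulVec θ = 0 ↔ ∃ w : Fin dM → ℝ, θ = QM.mulVec w)
    (hQnull : ∀ θ : ((Unit ⊕ Unit ⊕ Fin L) ⊕ Fin L) → ℝ,
      (constrCat r).mulVec θ = 0 ↔ ∃ w : Fin d → ℝ, θ = Q.mulVec w)
    -- the reparametrized designs have full column rank
    (hGramM : IsUnit ((designMain x r * QM)ᵀ * (designMain x r * QM)).det)
    (hGram : IsUnit ((designCat x r * Q)ᵀ * (designCat x r * Q)).det)
    -- residual scales
    (SM S : ℝ) (hSM : 0 < SM) (hS : 0 < S) (hle : S ≤ SM) :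
    S * Real.sqrt
        ((Q * ((designCat x r * Q)ᵀ * (designCat x r * Q))⁻¹ * Qᵀ)
          (Sum.inl (Sum.inr (Sum.inl ()))) (Sum.inl (Sum.inr (Sum.inl ())))) ≤
      SM * Real.sqrt
        ((QM * ((designMain x r * QM)ᵀ * (designMain x r * QM))⁻¹ * QMᵀ)
          (Sum.inr (Sum.inl ())) (Sum.inr (Sum.inl ()))) := by
  classical
  have hnR : (0:ℝ) < (n:ℝ) := by
    have h1 := hcount ⟨0, hL⟩
    have h2 : (univ.filter (fun i : Fin n => r i = ⟨0,hL⟩)).card ≤ n := by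
      simpa using Finset.card_filter_le (univ : Finset (Fin n)) _
    exact_mod_cast lt_of_lt_of_le h1 h2
  have hnne : (n:ℝ) ≠ 0 := hnR.ne'
  have hdev : ∑ ℓ, gN r ℓ * ((∑ i, x i) / n - gm x r ℓ) = 0 := by
    have he : ∑ ℓ, gN r ℓ * ((∑ i, x i) / n - gm x r ℓ)
        = ((∑ i, x i) / n) * (∑ ℓ, gN r ℓ) - ∑ ℓ, gN r ℓ * gm x r ℓ := by
      rw [Finset.mul_sum, ← Finset.sum_sub_distrib]
      exact Finset.sum_congr rfl fun ℓ _ => by ring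
    rw [he, sum_gN, sum_gNm x r hcount]
    field_simp
    ring
  have hσ2ne : groupVar x r ⟨0, hL⟩ ≠ 0 := by
    intro h0
    have hx : ∀ i, x i = gm x r (r i) := by
      intro i
      have hsq := sq_centered_group x r hcount hL heqvar (r i)
      rw [h0, mul_zero] at hsq
      have hmem : i ∈ univ.filter (fun i' : Fin n => r i' = r i) := by simp
      have hz := (Finset.sum_eq_zero_iff_of_nonneg (fun j _ => sq_nonneg _)).mp hsq i hmem
      have := pow_eq_zero_iff (n := 2) (by norm_num) |>.mp hz
      linarith [this]
    obtain ⟨w, hw⟩ := (hQMnull _).mp (constrMain_mulVec_thetaM x r 1 hdev)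
    have hX0 : (designMain x r).mulVec (thetaM x r 1) = 0 := by
      rw [designMain_mulVec_thetaM]
      funext i
      rw [hx i]; simp
    have hGw : ((designMain x r * QM)ᵀ * (designMain x r * QM)).mulVec w = 0 := by
      rw [← Matrix.mulVec_mulVec,
        show (designMain x r * QM).mulVec w = (designMain x r).mulVec (QM.mulVec w) from
          (Matrix.mulVec_mulVec _ _ _).symm,
        ← hw, hX0, Matrix.mulVec_zero]
    have hw0 : w = 0 := mulVec_eq_zero_of_isUnit_det _ hGramM hGw
    have h1 := congrFun hw (Sum.inr (Sum.inl ()))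
    rw [hw0, Matrix.mulVec_zero] at h1
    simp [thetaM] at h1
  have hnσ : (n:ℝ) * groupVar x r ⟨0, hL⟩ ≠ 0 := mul_ne_zero hnne hσ2ne
  set c := ((n:ℝ) * groupVar x r ⟨0, hL⟩)⁻¹ with hcdef
  have hc1 : c * ((n:ℝ) * groupVar x r ⟨0, hL⟩) = 1 := inv_mul_cancel₀ hnσ
  have hc2 : ∀ ℓ, c * (gN r ℓ * groupVar x r ⟨0, hL⟩) = gN r ℓ / n := by
    intro ℓ
    rw [hcdef]
    field_simp
  -- main-only model
  have heqM : (designMain x r)ᵀ.mulVec ((designMain x r).mulVec (thetaM x r c)) =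
      Pi.single (Sum.inr (Sum.inl ())) 1 + (constrMain r)ᵀ.mulVec 0 := by
    rw [designMain_mulVec_thetaM]
    funext p
    rcases p with _ | p
    · simp only [Matrix.mulVec, dotProduct, Matrix.transpose_apply, designMain,
        Matrix.of_apply, one_mul, Pi.add_apply, Pi.single_apply, reduceCtorEq, if_false,
        Matrix.mulVec_zero, Pi.zero_apply, add_zero]
      rw [← Finset.mul_sum, sum_centered x r hcount, mul_zero]
    · rcases p with _ | ℓ
      · simp only [Matrix.mulVec, dotProduct, Matrix.transpose_apply, designMain,
          Matrix.of_apply, Pi.add_apply, Pi.single_apply, if_pos rfl,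
          Matrix.mulVec_zero, Pi.zero_apply, add_zero]
        calc ∑ i, x i * (c * (x i - gm x r (r i)))
            = c * ∑ i, x i * (x i - gm x r (r i)) := by
              rw [Finset.mul_sum]; exact Finset.sum_congr rfl fun i _ => by ring
          _ = 1 := by rw [sum_x_centered x r hcount hL heqvar, hc1]
      · simp only [Matrix.mulVec, dotProduct, Matrix.transpose_apply, designMain,
          Matrix.of_apply, Pi.add_apply, Pi.single_apply, reduceCtorEq, Sum.inr.injEq,
          if_false, Matrix.mulVec_zero, Pi.zero_apply, add_zero, ite_mul, one_mul,
          zero_mul]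
        rw [← Finset.sum_filter]
        calc ∑ i ∈ univ.filter (fun i : Fin n => r i = ℓ), c * (x i - gm x r (r i))
            = c * ∑ i ∈ univ.filter (fun i : Fin n => r i = ℓ), (x i - gm x r ℓ) := by
              rw [Finset.mul_sum]
              exact Finset.sum_congr rfl fun i hi => by
                rw [(Finset.mem_filter.mp hi).2]
          _ = 0 := by rw [sum_centered_group x r hcount ℓ, mul_zero]
  -- cat-modified model
  have heqC : (designCat x r)ᵀ.mulVec ((designCat x r).mulVec (thetaC x r c)) =
      Pi.single (Sum.inl (Sum.inr (Sum.inl ()))) 1 + (constrCat r)ᵀ.mulVec ![0, 1] := by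
    rw [designCat_mulVec_thetaC]
    funext p
    rcases p with p | ℓ
    · rcases p with _ | p
      · simp only [Matrix.mulVec, dotProduct, Matrix.transpose_apply, designCat,
          designMain, Matrix.of_apply, one_mul, Pi.add_apply, Pi.single_apply,
          reduceCtorEq, Sum.inl.injEq, if_false, constrCat, Fin.sum_univ_two,
          Matrix.cons_val_zero, Matrix.cons_val_one, Matrix.head_cons, mul_zero, mul_one,
          Fin.isValue, reduceIte, zero_add, add_zero]
        rw [← Finset.mul_sum, sum_centered x r hcount, mul_zero]
        simp
      · rcases p with _ | ℓ
        · simp only [Matrix.mulVec, dotProduct, Matrix.transpose_apply, designCat,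
            designMain, Matrix.of_apply, Pi.add_apply, Pi.single_apply, if_pos rfl,
            constrCat, Fin.sum_univ_two, Matrix.cons_val_zero, Matrix.cons_val_one,
            Matrix.head_cons, mul_zero, mul_one, Fin.isValue, reduceIte, zero_add,
            add_zero]
          rw [if_neg (show ¬(1 : Fin 2) = 0 by decide), add_zero]
          calc ∑ i, x i * (c * (x i - gm x r (r i)))
              = c * ∑ i, x i * (x i - gm x r (r i)) := by
                rw [Finset.mul_sum]; exact Finset.sum_congr rfl fun i _ => by ring
            _ = 1 := by rw [sum_x_centered x r hcount hL heqvar, hc1]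
        · simp only [Matrix.mulVec, dotProduct, Matrix.transpose_apply, designCat,
            designMain, Matrix.of_apply, Pi.add_apply, Pi.single_apply, reduceCtorEq,
            Sum.inl.injEq, Sum.inr.injEq, if_false, constrCat, Fin.sum_univ_two,
            Matrix.cons_val_zero, Matrix.cons_val_one, Matrix.head_cons, mul_zero,
            mul_one, Fin.isValue, reduceIte, zero_add, add_zero, ite_mul, one_mul,
            zero_mul]
          rw [← Finset.sum_filter]
          calc ∑ i ∈ univ.filter (fun i : Fin n => r i = ℓ), c * (x i - gm x r (r i))
              = c * ∑ i ∈ univ.filter (fun i : Fin n => r i = ℓ), (x i - gm x r ℓ) := by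
                rw [Finset.mul_sum]
                exact Finset.sum_congr rfl fun i hi => by
                  rw [(Finset.mem_filter.mp hi).2]
            _ = 0 := by rw [sum_centered_group x r hcount ℓ, mul_zero]
    · simp only [Matrix.mulVec, dotProduct, Matrix.transpose_apply, designCat,
        designMain, Matrix.of_apply, Pi.add_apply, Pi.single_apply, reduceCtorEq,
        if_false, constrCat, Fin.sum_univ_two, Matrix.cons_val_zero, Matrix.cons_val_one,
        Matrix.head_cons, mul_zero, mul_one, Fin.isValue, reduceIte, zero_add,
        add_zero, ite_mul, zero_mul]
      rw [← Finset.sum_filter]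
      calc ∑ i ∈ univ.filter (fun i : Fin n => r i = ℓ), x i * (c * (x i - gm x r (r i)))
          = c * ∑ i ∈ univ.filter (fun i : Fin n => r i = ℓ), x i * (x i - gm x r ℓ) := by
            rw [Finset.mul_sum]
            exact Finset.sum_congr rfl fun i hi => by
              rw [(Finset.mem_filter.mp hi).2]; ring
        _ = gN r ℓ / n := by rw [sum_x_centered_group x r hcount hL heqvar ℓ, hc2 ℓ]
  have hM := key_entry (designMain x r) (constrMain r) QM hQMnull hGramM
    (Sum.inr (Sum.inl ())) (thetaM x r c) 0
    (constrMain_mulVec_thetaM x r c hdev) heqM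
  have hC := key_entry (designCat x r) (constrCat r) Q hQnull hGram
    (Sum.inl (Sum.inr (Sum.inl ()))) (thetaC x r c) ![0, 1]
    (constrCat_mulVec_thetaC x r c hdev) heqC
  rw [hM, hC]
  have hsame : thetaC x r c (Sum.inl (Sum.inr (Sum.inl ()))) =
      thetaM x r c (Sum.inr (Sum.inl ())) := rfl
  rw [hsame]
  exact mul_le_mul_of_nonneg_right hle (Real.sqrt_nonneg _)


end
end

section
/- Let x ∈ ℝⁿ and let r : {1,…,n} → {1,…,L} be a categorical covariate with all group counts n_ℓ = #{i : r(i) = ℓ} positive; let Z ∈ ℝ^{n×L} be its indicator matrix, H_Z the orthogonal projection of ℝⁿ onto the column span of Z, and D_x = diag(x). Then for every ℓ = 1,…,L, the ℓ-th entry of the row vector xᵀ (I − H_Z) D_x Z equals n_ℓ σ̂²_{x[ℓ]}, where σ̂²_{x[ℓ]} = n_ℓ^{-1} ∑_{i : r(i)=ℓ} x_i² − (n_ℓ^{-1} ∑_{i : r(i)=ℓ} x_i)². Consequently, if the group sample variances are all equal to a common value σ̂², then xᵀ (I − H_Z) D_x Z = n σ̂² π̂ᵀ, where π̂ = (n_1/n,…,n_L/n).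 -/
open Finset Matrix

noncomputable section

/-- The indicator matrix `Z ∈ ℝ^{n×L}` of a categorical covariate `r`. -/
def indicatorMatrix {n L : ℕ} (r : Fin n → Fin L) : Matrix (Fin n) (Fin L) ℝ :=
  Matrix.of fun i ℓ => if r i = ℓ then 1 else 0

/-- key identity for categorical-continuous interactions.  With
`Z` the indicator matrix of `r`, `H_Z = Z (Zᵀ Z)⁻¹ Zᵀ` the orthogonal projection onto
its column span, and `D_x = diag x`, the `ℓ`-th entry of the row vector
`xᵀ (I − H_Z) D_x Z` equals `n_ℓ σ̂²_{x[ℓ]}`; consequently, under the equal-variance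
condition the row vector equals `n σ̂² π̂ᵀ`. -/
theorem interaction_cross_product_identity
    {n L : ℕ} (x : Fin n → ℝ) (r : Fin n → Fin L)
    (hcount : ∀ ℓ : Fin L, 0 < (univ.filter (fun i : Fin n => r i = ℓ)).card) :
    (∀ ℓ : Fin L,
      Matrix.vecMul x
        ((1 - indicatorMatrix r *
            ((indicatorMatrix r)ᵀ * indicatorMatrix r)⁻¹ * (indicatorMatrix r)ᵀ) *
          (Matrix.diagonal x * indicatorMatrix r)) ℓ =
      ((univ.filter (fun i : Fin n => r i = ℓ)).card : ℝ) * groupVar x r ℓ) ∧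
    (∀ σ2 : ℝ, (∀ ℓ : Fin L, groupVar x r ℓ = σ2) →
      ∀ ℓ : Fin L,
        Matrix.vecMul x
          ((1 - indicatorMatrix r *
              ((indicatorMatrix r)ᵀ * indicatorMatrix r)⁻¹ * (indicatorMatrix r)ᵀ) *
            (Matrix.diagonal x * indicatorMatrix r)) ℓ =
        (n : ℝ) * σ2 *
          (((univ.filter (fun i : Fin n => r i = ℓ)).card : ℝ) / n)) := by
  set Z := indicatorMatrix r with hZ
  set c : Fin L → ℝ := fun ℓ => ((univ.filter (fun i : Fin n => r i = ℓ)).card : ℝ) with hc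
  have hcne : ∀ ℓ, c ℓ ≠ 0 := fun ℓ => by
    have := hcount ℓ
    simp only [hc]
    exact_mod_cast this.ne'
  set S : Fin L → ℝ := fun ℓ => ∑ i ∈ univ.filter (fun i : Fin n => r i = ℓ), x i with hS
  set Q : Fin L → ℝ := fun ℓ => ∑ i ∈ univ.filter (fun i : Fin n => r i = ℓ), x i ^ 2 with hQ
  -- Zᵀ Z = diagonal c
  have hZtZ : Zᵀ * Z = Matrix.diagonal c := by
    ext ℓ ℓ'
    by_cases h : ℓ = ℓ'
    · subst h
      simp only [Matrix.mul_apply, hZ, indicatorMatrix, Matrix.transpose_apply,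
        Matrix.of_apply, Matrix.diagonal_apply_eq, hc]
      rw [Finset.sum_congr rfl (fun i (_ : i ∈ univ) => show
        (if r i = ℓ then (1:ℝ) else 0) * (if r i = ℓ then 1 else 0)
          = if r i = ℓ then 1 else 0 from by by_cases h : r i = ℓ <;> simp [h])]
      rw [Finset.sum_boole]
    · simp only [Matrix.mul_apply, Matrix.diagonal_apply_ne _ h, hZ, indicatorMatrix,
        Matrix.transpose_apply, Matrix.of_apply, ite_mul, one_mul, zero_mul]
      apply Finset.sum_eq_zero
      intro i _
      by_cases h1 : r i = ℓ <;> by_cases h2 : r i = ℓ' <;> simp_all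
  have hinv : (Zᵀ * Z)⁻¹ = Matrix.diagonal (fun ℓ => (c ℓ)⁻¹) := by
    rw [hZtZ]
    apply Matrix.inv_eq_right_inv
    rw [Matrix.diagonal_mul_diagonal]
    ext i j
    by_cases h : i = j <;>
      simp [h, Matrix.diagonal, Matrix.one_apply, mul_inv_cancel₀ (hcne _)]
  -- the mean vector m with m j = S (r j) / c (r j)
  have hxZ : Matrix.vecMul x Z = S := by
    funext ℓ
    simp [hZ, indicatorMatrix, Matrix.vecMul, dotProduct, mul_ite, hS,
      Finset.sum_filter]
  have key : ∀ ℓ, Matrix.vecMul x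
        ((1 - Z * (Zᵀ * Z)⁻¹ * Zᵀ) * (Matrix.diagonal x * Z)) ℓ =
      Q ℓ - S ℓ * (c ℓ)⁻¹ * S ℓ := by
    intro ℓ
    rw [← Matrix.vecMul_vecMul, Matrix.vecMul_sub, Matrix.vecMul_one, hinv,
      ← Matrix.vecMul_vecMul (M := Z * Matrix.diagonal fun ℓ => (c ℓ)⁻¹),
      ← Matrix.vecMul_vecMul (M := Z), hxZ]
    have hm : Matrix.vecMul (Matrix.vecMul S (Matrix.diagonal fun ℓ => (c ℓ)⁻¹)) Zᵀ
        = fun j => S (r j) * (c (r j))⁻¹ := by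
      funext j
      simp [Matrix.vecMul, dotProduct, Matrix.vecMul_diagonal, hZ, indicatorMatrix,
        Matrix.transpose_apply, mul_ite, Matrix.diagonal_apply, Finset.sum_ite_eq,
        Finset.sum_ite_eq']
    rw [hm, ← Matrix.vecMul_vecMul]
    have hdiag : Matrix.vecMul (x - fun j => S (r j) * (c (r j))⁻¹) (Matrix.diagonal x)
        = fun j => (x j - S (r j) * (c (r j))⁻¹) * x j := by
      funext j; simp [Matrix.vecMul_diagonal]
    rw [hdiag]
    have : Matrix.vecMul (fun j => (x j - S (r j) * (c (r j))⁻¹) * x j) Z ℓ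
        = ∑ j ∈ univ.filter (fun j : Fin n => r j = ℓ), (x j - S (r j) * (c (r j))⁻¹) * x j := by
      simp [hZ, indicatorMatrix, Matrix.vecMul, dotProduct, mul_ite, Finset.sum_filter]
    rw [this]
    calc ∑ j ∈ univ.filter (fun j : Fin n => r j = ℓ), (x j - S (r j) * (c (r j))⁻¹) * x j
        = ∑ j ∈ univ.filter (fun j : Fin n => r j = ℓ),
            (x j ^ 2 - S ℓ * (c ℓ)⁻¹ * x j) := by
          refine Finset.sum_congr rfl (fun j hj => ?_)
          rw [Finset.mem_filter] at hj
          rw [hj.2]; ring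
      _ = Q ℓ - S ℓ * (c ℓ)⁻¹ * S ℓ := by
          rw [Finset.sum_sub_distrib, ← Finset.mul_sum]
  constructor
  · intro ℓ
    rw [key ℓ]
    have := hcne ℓ
    simp only [groupVar, hc] at *
    field_simp
    ring
  · intro σ2 hvar ℓ
    rw [key ℓ]
    have h1 : Q ℓ - S ℓ * (c ℓ)⁻¹ * S ℓ = c ℓ * groupVar x r ℓ := by
      have := hcne ℓ
      simp only [groupVar, hc] at *
      field_simp
      ring
    rw [h1, hvar ℓ]
    have hnpos : (0:ℝ) < n := by
      have h1 : (univ.filter (fun i : Fin n => r i = ℓ)).card ≤ n := by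
        simpa using Finset.card_filter_le univ (fun i : Fin n => r i = ℓ)
      have := lt_of_lt_of_le (hcount ℓ) h1
      exact_mod_cast this
    field_simp [hc]
    ring

end
end

section
/- Let y ∈ ℝⁿ, x ∈ ℝⁿ, and r : {1,…,n} → {1,…,L} with all group counts n_ℓ positive, sample proportions π̂_ℓ = n_ℓ/n, and group sample variances σ̂²_{x[ℓ]} = n_ℓ^{-1} ∑_{i : r(i)=ℓ} x_i² − (n_ℓ^{-1} ∑_{i : r(i)=ℓ} x_i)². Assume the equal-variance condition σ̂²_{x[ℓ]} = σ̂²_{x[1]} for all ℓ. Let X^M = [1, x, Z] with constraint matrix A^M encoding the ABC ∑_ℓ π̂_ℓ β_ℓ = 0, and let X = [1, x, Z, D_x Z] (D_x = diag(x)) with constraint matrix A encoding ∑_ℓ π̂_ℓ β_ℓ = 0 and ∑_ℓ π̂_ℓ γ_ℓ = 0. Let V^M and V be the covariance factors of the two constrained models (assumed to exist), and let j be the coordinate of α₁, the coefficient on x. Then the diagonal entries corresponding to α₁ coincide: V_{jj} = V^M_{jj}. Consequently, for any residual scales Ŝ_M, Ŝ > 0, the standard errors satisfy the exact ratio SE(α̂₁)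 = (Ŝ/Ŝ_M)·SE(α̂₁^M). -/
open Finset Matrix

noncomputable section

namespace ABC14

variable {n L : ℕ}

def gr (r : Fin n → Fin L) (ℓ : Fin L) : Finset (Fin n) :=
  univ.filter fun i => r i = ℓ

lemma mem_gr {r : Fin n → Fin L} {ℓ : Fin L} {i : Fin n} (h : i ∈ gr r ℓ) : r i = ℓ :=
  (Finset.mem_filter.mp h).2

lemma sum_fiber (r : Fin n → Fin L) (f : Fin n → ℝ) :
    ∑ ℓ, ∑ i ∈ gr r ℓ, f i = ∑ i, f i :=
  Finset.sum_fiberwise_of_maps_to (fun i _ => Finset.mem_univ (r i)) f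

def xb (x : Fin n → ℝ) (r : Fin n → Fin L) (ℓ : Fin L) : ℝ :=
  (∑ i ∈ gr r ℓ, x i) / ((gr r ℓ).card : ℝ)

lemma groupVar_eq (x : Fin n → ℝ) (r : Fin n → Fin L) (ℓ : Fin L) :
    groupVar x r ℓ = (∑ i ∈ gr r ℓ, x i ^ 2) / ((gr r ℓ).card : ℝ) - (xb x r ℓ) ^ 2 := rfl

lemma grpsum1 (x : Fin n → ℝ) (r : Fin n → Fin L) (ℓ : Fin L)
    (hc : 0 < (gr r ℓ).card) :
    ∑ i ∈ gr r ℓ, (x i - xb x r ℓ) = 0 := by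
  have hN : ((gr r ℓ).card : ℝ) ≠ 0 := Nat.cast_ne_zero.mpr hc.ne'
  rw [Finset.sum_sub_distrib, Finset.sum_const, nsmul_eq_mul, xb]
  field_simp
  ring

lemma grpsum2 (x : Fin n → ℝ) (r : Fin n → Fin L) (ℓ : Fin L)
    (hc : 0 < (gr r ℓ).card) :
    ∑ i ∈ gr r ℓ, x i * (x i - xb x r ℓ) = ((gr r ℓ).card : ℝ) * groupVar x r ℓ := by
  have hN : ((gr r ℓ).card : ℝ) ≠ 0 := Nat.cast_ne_zero.mpr hc.ne'
  have h1 : ∑ i ∈ gr r ℓ, x i * (x i - xb x r ℓ)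
      = (∑ i ∈ gr r ℓ, x i ^ 2) - xb x r ℓ * ∑ i ∈ gr r ℓ, x i := by
    rw [Finset.mul_sum, ← Finset.sum_sub_distrib]
    exact Finset.sum_congr rfl fun i _ => by ring
  rw [h1, groupVar_eq, xb]
  field_simp

lemma grpsumsq (x : Fin n → ℝ) (r : Fin n → Fin L) (ℓ : Fin L)
    (hc : 0 < (gr r ℓ).card) :
    ∑ i ∈ gr r ℓ, (x i - xb x r ℓ) ^ 2 = ((gr r ℓ).card : ℝ) * groupVar x r ℓ := by
  have h1 : ∑ i ∈ gr r ℓ, (x i - xb x r ℓ) ^ 2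
      = (∑ i ∈ gr r ℓ, x i * (x i - xb x r ℓ))
        - xb x r ℓ * ∑ i ∈ gr r ℓ, (x i - xb x r ℓ) := by
    rw [Finset.mul_sum, ← Finset.sum_sub_distrib]
    exact Finset.sum_congr rfl fun i _ => by ring
  rw [h1, grpsum1 x r ℓ hc, grpsum2 x r ℓ hc, mul_zero, sub_zero]

lemma card_sum (r : Fin n → Fin L) : ∑ ℓ, ((gr r ℓ).card : ℝ) = n := by
  have := sum_fiber r (fun _ => (1 : ℝ))
  simpa using this

lemma grpsum1' (x : Fin n → ℝ) (r : Fin n → Fin L) (ℓ : Fin L)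
    (hc : 0 < (gr r ℓ).card) :
    ∑ i ∈ gr r ℓ, (x i - xb x r (r i)) = 0 := by
  rw [Finset.sum_congr rfl fun i hi => by rw [mem_gr hi]]
  exact grpsum1 x r ℓ hc

lemma tot1 (x : Fin n → ℝ) (r : Fin n → Fin L)
    (hcount : ∀ ℓ, 0 < (gr r ℓ).card) :
    ∑ i, (x i - xb x r (r i)) = 0 := by
  rw [← sum_fiber r]
  exact Finset.sum_eq_zero fun ℓ _ => grpsum1' x r ℓ (hcount ℓ)

lemma grpsum2' (hL : 0 < L) (x : Fin n → ℝ) (r : Fin n → Fin L) (ℓ : Fin L)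
    (hc : 0 < (gr r ℓ).card)
    (heqvar : ∀ ℓ : Fin L, groupVar x r ℓ = groupVar x r ⟨0, hL⟩) :
    ∑ i ∈ gr r ℓ, x i * (x i - xb x r (r i))
      = ((gr r ℓ).card : ℝ) * groupVar x r ⟨0, hL⟩ := by
  rw [Finset.sum_congr rfl fun i hi => by rw [mem_gr hi]]
  rw [grpsum2 x r ℓ hc, heqvar ℓ]

lemma tot2 (hL : 0 < L) (x : Fin n → ℝ) (r : Fin n → Fin L)
    (hcount : ∀ ℓ, 0 < (gr r ℓ).card)
    (heqvar : ∀ ℓ : Fin L, groupVar x r ℓ = groupVar x r ⟨0, hL⟩) :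
    ∑ i, x i * (x i - xb x r (r i)) = (n : ℝ) * groupVar x r ⟨0, hL⟩ := by
  rw [← sum_fiber r,
    Finset.sum_congr rfl fun ℓ _ => grpsum2' hL x r ℓ (hcount ℓ) heqvar,
    ← Finset.sum_mul, card_sum]

lemma sum_beta (x : Fin n → ℝ) (r : Fin n → Fin L)
    (hcount : ∀ ℓ, 0 < (gr r ℓ).card) (θβ : Fin L → ℝ) :
    ∑ i, θβ (r i) * (x i - xb x r (r i)) = 0 := by
  rw [← sum_fiber r]
  refine Finset.sum_eq_zero fun ℓ _ => ?_
  rw [Finset.sum_congr rfl fun i hi => by rw [mem_gr hi]]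
  rw [← Finset.mul_sum, grpsum1 x r ℓ (hcount ℓ), mul_zero]

lemma sum_gamma (hL : 0 < L) (x : Fin n → ℝ) (r : Fin n → Fin L)
    (hcount : ∀ ℓ, 0 < (gr r ℓ).card)
    (heqvar : ∀ ℓ : Fin L, groupVar x r ℓ = groupVar x r ⟨0, hL⟩) (θγ : Fin L → ℝ) :
    ∑ i, θγ (r i) * (x i * (x i - xb x r (r i)))
      = (∑ ℓ, ((gr r ℓ).card : ℝ) * θγ ℓ) * groupVar x r ⟨0, hL⟩ := by
  rw [← sum_fiber r, Finset.sum_mul]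
  refine Finset.sum_congr rfl fun ℓ _ => ?_
  rw [Finset.sum_congr rfl fun i hi => by rw [mem_gr hi]]
  rw [← Finset.mul_sum, grpsum2 x r ℓ (hcount ℓ), heqvar ℓ]
  ring


lemma designMain_mulVec (x : Fin n → ℝ) (r : Fin n → Fin L) (θ : (Unit ⊕ Unit ⊕ Fin L) → ℝ) :
    (designMain x r).mulVec θ = fun i =>
      θ (Sum.inl ()) + (x i * θ (Sum.inr (Sum.inl ())) + θ (Sum.inr (Sum.inr (r i)))) := by
  funext i
  simp [designMain, Matrix.mulVec, dotProduct, Fintype.sum_sum_type, ite_mul,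
    Finset.sum_ite_eq, Finset.sum_ite_eq']

lemma designCat_mulVec (x : Fin n → ℝ) (r : Fin n → Fin L)
    (θ : ((Unit ⊕ Unit ⊕ Fin L) ⊕ Fin L) → ℝ) :
    (designCat x r).mulVec θ = fun i =>
      (θ (Sum.inl (Sum.inl ())) + (x i * θ (Sum.inl (Sum.inr (Sum.inl ())))
        + θ (Sum.inl (Sum.inr (Sum.inr (r i)))))) + x i * θ (Sum.inr (r i)) := by
  funext i
  simp [designCat, designMain, Matrix.mulVec, dotProduct, Fintype.sum_sum_type, ite_mul,
    Finset.sum_ite_eq, Finset.sum_ite_eq']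

lemma constrMain_sum (x : Fin n → ℝ) (r : Fin n → Fin L) (hn : (0:ℝ) < n)
    (θ : (Unit ⊕ Unit ⊕ Fin L) → ℝ) (hθ : (constrMain r).mulVec θ = 0) :
    ∑ ℓ, ((gr r ℓ).card : ℝ) * θ (Sum.inr (Sum.inr ℓ)) = 0 := by
  have h0 := congrFun hθ 0
  simp [constrMain, Matrix.mulVec, dotProduct, Fintype.sum_sum_type] at h0
  have : ∑ ℓ, ((gr r ℓ).card : ℝ) * θ (Sum.inr (Sum.inr ℓ))
      = (n : ℝ) * ∑ ℓ, ((gr r ℓ).card : ℝ) / n * θ (Sum.inr (Sum.inr ℓ)) := by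
    rw [Finset.mul_sum]
    refine Finset.sum_congr rfl fun ℓ _ => ?_
    field_simp
  rw [this]
  unfold gr
  rw [h0, mul_zero]


lemma constrMain_mulVec (r : Fin n → Fin L) (θ : (Unit ⊕ Unit ⊕ Fin L) → ℝ) :
    (constrMain r).mulVec θ
      = fun _ => ∑ ℓ, ((gr r ℓ).card : ℝ) / n * θ (Sum.inr (Sum.inr ℓ)) := by
  funext k
  simp [constrMain, Matrix.mulVec, dotProduct, Fintype.sum_sum_type, gr]

lemma constrCat_mulVec (r : Fin n → Fin L) (θ : ((Unit ⊕ Unit ⊕ Fin L) ⊕ Fin L) → ℝ) :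
    (constrCat r).mulVec θ = fun k =>
      if k = 0 then ∑ ℓ, ((gr r ℓ).card : ℝ) / n * θ (Sum.inl (Sum.inr (Sum.inr ℓ)))
      else ∑ ℓ, ((gr r ℓ).card : ℝ) / n * θ (Sum.inr ℓ) := by
  funext k
  by_cases hk : k = 0 <;>
    simp [constrCat, Matrix.mulVec, dotProduct, Fintype.sum_sum_type, gr, hk]

lemma scale_sum_zero {r : Fin n → Fin L} (hn : (0:ℝ) < n) (f : Fin L → ℝ)
    (h : ∑ ℓ, ((gr r ℓ).card : ℝ) / n * f ℓ = 0) :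
    ∑ ℓ, ((gr r ℓ).card : ℝ) * f ℓ = 0 := by
  have : ∑ ℓ, ((gr r ℓ).card : ℝ) * f ℓ
      = (n : ℝ) * ∑ ℓ, ((gr r ℓ).card : ℝ) / n * f ℓ := by
    rw [Finset.mul_sum]
    refine Finset.sum_congr rfl fun ℓ _ => ?_
    field_simp
  rw [this, h, mul_zero]

def xbarAll (x : Fin n → ℝ) : ℝ := (∑ i, x i) / n

def thetaStar (x : Fin n → ℝ) (r : Fin n → Fin L) (lam : ℝ) : (Unit ⊕ Unit ⊕ Fin L) → ℝ :=
  Sum.elim (fun _ => -(lam * xbarAll x))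
    (Sum.elim (fun _ => lam) (fun ℓ => lam * (xbarAll x - xb x r ℓ)))

lemma sum_card_xb (x : Fin n → ℝ) (r : Fin n → Fin L)
    (hcount : ∀ ℓ, 0 < (gr r ℓ).card) :
    ∑ ℓ, ((gr r ℓ).card : ℝ) * xb x r ℓ = ∑ i, x i := by
  rw [← sum_fiber r x]
  refine Finset.sum_congr rfl fun ℓ _ => ?_
  have hN : ((gr r ℓ).card : ℝ) ≠ 0 := Nat.cast_ne_zero.mpr (hcount ℓ).ne'
  rw [xb]
  field_simp

lemma thetaStar_constr (x : Fin n → ℝ) (r : Fin n → Fin L) (hn : (0:ℝ) < n)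
    (hcount : ∀ ℓ, 0 < (gr r ℓ).card) (lam : ℝ) :
    (constrMain r).mulVec (thetaStar x r lam) = 0 := by
  rw [constrMain_mulVec]
  funext k
  show ∑ ℓ, ((gr r ℓ).card : ℝ) / n * (lam * (xbarAll x - xb x r ℓ)) = 0
  have hstep : ∀ ℓ ∈ (univ : Finset (Fin L)),
      ((gr r ℓ).card : ℝ) / n * (lam * (xbarAll x - xb x r ℓ))
        = lam / n * (((gr r ℓ).card : ℝ) * xbarAll x - ((gr r ℓ).card : ℝ) * xb x r ℓ) :=
    fun ℓ _ => by ring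
  rw [Finset.sum_congr rfl hstep, ← Finset.mul_sum, Finset.sum_sub_distrib,
    ← Finset.sum_mul, card_sum, sum_card_xb x r hcount, xbarAll]
  field_simp
  ring

lemma thetaStar_design (x : Fin n → ℝ) (r : Fin n → Fin L) (lam : ℝ) :
    (designMain x r).mulVec (thetaStar x r lam)
      = fun i => lam * (x i - xb x r (r i)) := by
  rw [designMain_mulVec]
  funext i
  show -(lam * xbarAll x) + (x i * lam + lam * (xbarAll x - xb x r (r i))) = _
  ring

def thetaStarC (x : Fin n → ℝ) (r : Fin n → Fin L) (lam : ℝ) :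
    ((Unit ⊕ Unit ⊕ Fin L) ⊕ Fin L) → ℝ :=
  Sum.elim (thetaStar x r lam) (fun _ => 0)

lemma thetaStarC_constr (x : Fin n → ℝ) (r : Fin n → Fin L) (hn : (0:ℝ) < n)
    (hcount : ∀ ℓ, 0 < (gr r ℓ).card) (lam : ℝ) :
    (constrCat r).mulVec (thetaStarC x r lam) = 0 := by
  rw [constrCat_mulVec]
  funext k
  by_cases hk : k = 0
  · simp only [hk, if_true]
    have := congrFun (thetaStar_constr x r hn hcount lam) 0
    rw [constrMain_mulVec] at this
    simpa [thetaStarC] using this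
  · simp [hk, thetaStarC]

lemma thetaStarC_design (x : Fin n → ℝ) (r : Fin n → Fin L) (lam : ℝ) :
    (designCat x r).mulVec (thetaStarC x r lam)
      = fun i => lam * (x i - xb x r (r i)) := by
  rw [designCat_mulVec]
  funext i
  show (-(lam * xbarAll x) + (x i * lam + lam * (xbarAll x - xb x r (r i)))) + x i * 0 = _
  ring


lemma dualMain (hL : 0 < L) (x : Fin n → ℝ) (r : Fin n → Fin L) (hn : (0:ℝ) < n)
    (hcount : ∀ ℓ, 0 < (gr r ℓ).card)
    (heqvar : ∀ ℓ : Fin L, groupVar x r ℓ = groupVar x r ⟨0, hL⟩)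
    (hσ : groupVar x r ⟨0, hL⟩ ≠ 0)
    (θ : (Unit ⊕ Unit ⊕ Fin L) → ℝ) (hθ : (constrMain r).mulVec θ = 0) :
    (designMain x r).mulVec θ ⬝ᵥ
        (fun i => ((n : ℝ) * groupVar x r ⟨0, hL⟩)⁻¹ * (x i - xb x r (r i)))
      = θ (Sum.inr (Sum.inl ())) := by
  set σ := groupVar x r ⟨0, hL⟩ with hσdef
  set lam := ((n : ℝ) * σ)⁻¹ with hlam
  have hexp : (designMain x r).mulVec θ ⬝ᵥ (fun i => lam * (x i - xb x r (r i)))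
      = lam * (θ (Sum.inl ()) * ∑ i, (x i - xb x r (r i))
        + θ (Sum.inr (Sum.inl ())) * ∑ i, x i * (x i - xb x r (r i))
        + ∑ i, θ (Sum.inr (Sum.inr (r i))) * (x i - xb x r (r i))) := by
    rw [designMain_mulVec]
    simp only [dotProduct, Finset.mul_sum, mul_add]
    rw [← Finset.sum_add_distrib, ← Finset.sum_add_distrib]
    exact Finset.sum_congr rfl fun i _ => by ring
  rw [hexp, tot1 x r hcount, tot2 hL x r hcount heqvar,
    sum_beta x r hcount (fun ℓ => θ (Sum.inr (Sum.inr ℓ)))]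
  simp only [mul_zero, zero_add, add_zero]
  rw [hlam, ← hσdef]
  have hns : (n : ℝ) * σ ≠ 0 := mul_ne_zero (ne_of_gt hn) hσ
  field_simp

lemma dualCat (hL : 0 < L) (x : Fin n → ℝ) (r : Fin n → Fin L) (hn : (0:ℝ) < n)
    (hcount : ∀ ℓ, 0 < (gr r ℓ).card)
    (heqvar : ∀ ℓ : Fin L, groupVar x r ℓ = groupVar x r ⟨0, hL⟩)
    (hσ : groupVar x r ⟨0, hL⟩ ≠ 0)
    (θ : ((Unit ⊕ Unit ⊕ Fin L) ⊕ Fin L) → ℝ) (hθ : (constrCat r).mulVec θ = 0) :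
    (designCat x r).mulVec θ ⬝ᵥ
        (fun i => ((n : ℝ) * groupVar x r ⟨0, hL⟩)⁻¹ * (x i - xb x r (r i)))
      = θ (Sum.inl (Sum.inr (Sum.inl ()))) := by
  set σ := groupVar x r ⟨0, hL⟩ with hσdef
  set lam := ((n : ℝ) * σ)⁻¹ with hlam
  have hγ : ∑ ℓ, ((gr r ℓ).card : ℝ) * θ (Sum.inr ℓ) = 0 := by
    have h1 := congrFun hθ 1
    rw [constrCat_mulVec] at h1
    simp only [show (1 : Fin 2) ≠ 0 by decide, if_false] at h1
    exact scale_sum_zero hn _ h1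
  have hexp : (designCat x r).mulVec θ ⬝ᵥ (fun i => lam * (x i - xb x r (r i)))
      = lam * (θ (Sum.inl (Sum.inl ())) * ∑ i, (x i - xb x r (r i))
        + θ (Sum.inl (Sum.inr (Sum.inl ()))) * ∑ i, x i * (x i - xb x r (r i))
        + ∑ i, θ (Sum.inl (Sum.inr (Sum.inr (r i)))) * (x i - xb x r (r i))
        + ∑ i, θ (Sum.inr (r i)) * (x i * (x i - xb x r (r i)))) := by
    rw [designCat_mulVec]
    simp only [dotProduct, Finset.mul_sum, mul_add]
    rw [← Finset.sum_add_distrib, ← Finset.sum_add_distrib, ← Finset.sum_add_distrib]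
    exact Finset.sum_congr rfl fun i _ => by ring
  rw [hexp, tot1 x r hcount, tot2 hL x r hcount heqvar,
    sum_beta x r hcount (fun ℓ => θ (Sum.inl (Sum.inr (Sum.inr ℓ)))),
    sum_gamma hL x r hcount heqvar (fun ℓ => θ (Sum.inr ℓ)), hγ]
  simp only [mul_zero, zero_add, add_zero, zero_mul]
  rw [hlam, ← hσdef]
  have hns : (n : ℝ) * σ ≠ 0 := mul_ne_zero (ne_of_gt hn) hσ
  field_simp

lemma sigma_ne (hL : 0 < L) {dM : ℕ} (x : Fin n → ℝ) (r : Fin n → Fin L)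
    (hn : (0:ℝ) < n) (hcount : ∀ ℓ, 0 < (gr r ℓ).card)
    (heqvar : ∀ ℓ : Fin L, groupVar x r ℓ = groupVar x r ⟨0, hL⟩)
    (QM : Matrix (Unit ⊕ Unit ⊕ Fin L) (Fin dM) ℝ)
    (hQMnull : ∀ θ : (Unit ⊕ Unit ⊕ Fin L) → ℝ,
      (constrMain r).mulVec θ = 0 ↔ ∃ w : Fin dM → ℝ, θ = QM.mulVec w)
    (hGramM : IsUnit ((designMain x r * QM)ᵀ * (designMain x r * QM)).det) :
    groupVar x r ⟨0, hL⟩ ≠ 0 := by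
  intro hσ
  have hx : ∀ i, x i - xb x r (r i) = 0 := by
    intro i
    have hi : i ∈ gr r (r i) := Finset.mem_filter.mpr ⟨Finset.mem_univ i, rfl⟩
    have hsq : ∑ j ∈ gr r (r i), (x j - xb x r (r i)) ^ 2 = 0 := by
      rw [grpsumsq x r (r i) (hcount (r i)), heqvar (r i), hσ, mul_zero]
    have h0 := (Finset.sum_eq_zero_iff_of_nonneg (fun j _ => sq_nonneg _)).mp hsq i hi
    exact sq_eq_zero_iff.mp h0
  have hdes : (designMain x r).mulVec (thetaStar x r 1) = 0 := by
    rw [thetaStar_design]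
    funext i
    rw [hx i, mul_zero]
    rfl
  obtain ⟨w, hw⟩ := (hQMnull _).mp (thetaStar_constr x r hn hcount 1)
  have hMw : (designMain x r * QM).mulVec w = 0 := by
    rw [← Matrix.mulVec_mulVec, ← hw, hdes]
  have hw0 : w = 0 := by
    have h2 : ((designMain x r * QM)ᵀ * (designMain x r * QM)).mulVec w = 0 := by
      rw [← Matrix.mulVec_mulVec, hMw, Matrix.mulVec_zero]
    have h3 : (((designMain x r * QM)ᵀ * (designMain x r * QM))⁻¹).mulVec
        (((designMain x r * QM)ᵀ * (designMain x r * QM)).mulVec w) = 0 := by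
      rw [h2, Matrix.mulVec_zero]
    rwa [Matrix.mulVec_mulVec, Matrix.nonsing_inv_mul _ hGramM, Matrix.one_mulVec] at h3
  have h4 : thetaStar x r (1 : ℝ) (Sum.inr (Sum.inl ())) = 0 := by
    rw [hw, hw0, Matrix.mulVec_zero]
    rfl
  simp [thetaStar] at h4


lemma covFactor_diag {N d : ℕ} {P : Type*} [Fintype P] [DecidableEq P]
    (X : Matrix (Fin N) P ℝ) (Q : Matrix P (Fin d) ℝ) (j : P)
    (hGram : IsUnit ((X * Q)ᵀ * (X * Q)).det)
    (c : Fin N → ℝ) (w : Fin d → ℝ) (hc : c = (X * Q).mulVec w)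
    (hdual : ∀ v : Fin d → ℝ, ((X * Q).mulVec v) ⬝ᵥ c = Q.mulVec v j) :
    (Q * ((X * Q)ᵀ * (X * Q))⁻¹ * Qᵀ) j j = c ⬝ᵥ c := by
  set M := X * Q with hM
  set G := Mᵀ * M with hG
  have hGw : G.mulVec w = fun k => Q j k := by
    funext k
    have h1 : G.mulVec w = Mᵀ.mulVec c := by
      rw [hc, hG, ← Matrix.mulVec_mulVec]
    have h2 := hdual (Pi.single k 1)
    have h3 : M.mulVec (Pi.single k 1) = fun i => M i k := by
      funext i
      simp [Matrix.mulVec_single]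
    have h4 : Q.mulVec (Pi.single k 1) j = Q j k := by
      simp [Matrix.mulVec_single]
    rw [h1]
    rw [h3, h4] at h2
    simpa [Matrix.mulVec, dotProduct] using h2
  have hwval : w = G⁻¹.mulVec (fun k => Q j k) := by
    rw [← hGw, Matrix.mulVec_mulVec, Matrix.nonsing_inv_mul G hGram, Matrix.one_mulVec]
  have hLHS : (Q * G⁻¹ * Qᵀ) j j = Q.mulVec w j := by
    rw [hwval]
    simp only [Matrix.mul_apply, Matrix.mulVec, dotProduct, Finset.mul_sum, Finset.sum_mul,
      Matrix.transpose_apply]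
    rw [Finset.sum_comm]
    refine Finset.sum_congr rfl fun k _ => Finset.sum_congr rfl fun k' _ => by ring
  have hRHS : c ⬝ᵥ c = Q.mulVec w j := by
    rw [← hdual w, ← hc]
  rw [hLHS, hRHS]

end ABC14

/-- exact invariance of the covariance-factor diagonal entry of the
main `x`-effect.  Under the equal-variance condition and ABCs, the diagonal entries of
the covariance factors `V = Q (X_Qᵀ X_Q)⁻¹ Qᵀ` corresponding to the coefficient on `x`
coincide between the main-only and cat-modified models; consequently, for any residual
scales `SM, S > 0` the standard errors satisfy the exact ratio
`SE(α̂₁) = (S / SM) · SE(α̂₁^M)`. -/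
theorem abc_ancova_covariance_factor_invariance
    {n L : ℕ} (hL : 0 < L) (dM d : ℕ)
    (x : Fin n → ℝ) (r : Fin n → Fin L)
    (hcount : ∀ ℓ : Fin L, 0 < (univ.filter (fun i : Fin n => r i = ℓ)).card)
    -- equal-variance condition
    (heqvar : ∀ ℓ : Fin L, groupVar x r ℓ = groupVar x r ⟨0, hL⟩)
    (QM : Matrix (Unit ⊕ Unit ⊕ Fin L) (Fin dM) ℝ)
    (Q : Matrix ((Unit ⊕ Unit ⊕ Fin L) ⊕ Fin L) (Fin d) ℝ)
    -- orthonormal columns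
    (hQMorth : QMᵀ * QM = 1)
    (hQorth : Qᵀ * Q = 1)
    -- the columns span the null spaces of the constraint matrices
    (hQMnull : ∀ θ : (Unit ⊕ Unit ⊕ Fin L) → ℝ,
      (constrMain r).mulVec θ = 0 ↔ ∃ w : Fin dM → ℝ, θ = QM.mulVec w)
    (hQnull : ∀ θ : ((Unit ⊕ Unit ⊕ Fin L) ⊕ Fin L) → ℝ,
      (constrCat r).mulVec θ = 0 ↔ ∃ w : Fin d → ℝ, θ = Q.mulVec w)
    -- the reparametrized designs have full column rank
    (hGramM : IsUnit ((designMain x r * QM)ᵀ * (designMain x r * QM)).det)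
    (hGram : IsUnit ((designCat x r * Q)ᵀ * (designCat x r * Q)).det) :
    ((Q * ((designCat x r * Q)ᵀ * (designCat x r * Q))⁻¹ * Qᵀ)
        (Sum.inl (Sum.inr (Sum.inl ()))) (Sum.inl (Sum.inr (Sum.inl ()))) =
      (QM * ((designMain x r * QM)ᵀ * (designMain x r * QM))⁻¹ * QMᵀ)
        (Sum.inr (Sum.inl ())) (Sum.inr (Sum.inl ()))) ∧
    (∀ SM S : ℝ, 0 < SM → 0 < S →
      S * Real.sqrt
          ((Q * ((designCat x r * Q)ᵀ * (designCat x r * Q))⁻¹ * Qᵀ)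
            (Sum.inl (Sum.inr (Sum.inl ()))) (Sum.inl (Sum.inr (Sum.inl ())))) =
        (S / SM) *
          (SM * Real.sqrt
            ((QM * ((designMain x r * QM)ᵀ * (designMain x r * QM))⁻¹ * QMᵀ)
              (Sum.inr (Sum.inl ())) (Sum.inr (Sum.inl ()))))) := by
  have hcount' : ∀ ℓ, 0 < (ABC14.gr r ℓ).card := hcount
  have hn : (0:ℝ) < n := by
    have h1 : 0 < n :=
      lt_of_lt_of_le (hcount ⟨0, hL⟩) (by simpa using Finset.card_filter_le univ fun i => r i = ⟨0, hL⟩)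
    exact_mod_cast h1
  have hσ : groupVar x r ⟨0, hL⟩ ≠ 0 :=
    ABC14.sigma_ne hL x r hn hcount' heqvar QM hQMnull hGramM
  set c : Fin n → ℝ :=
    fun i => ((n : ℝ) * groupVar x r ⟨0, hL⟩)⁻¹ * (x i - ABC14.xb x r (r i)) with hcdef
  set lam : ℝ := ((n : ℝ) * groupVar x r ⟨0, hL⟩)⁻¹ with hlam
  obtain ⟨wM, hwM⟩ := (hQMnull _).mp (ABC14.thetaStar_constr x r hn hcount' lam)
  have hcM : c = (designMain x r * QM).mulVec wM := by
    rw [← Matrix.mulVec_mulVec, ← hwM, ABC14.thetaStar_design]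
  have hdM : ∀ v : Fin dM → ℝ,
      ((designMain x r * QM).mulVec v) ⬝ᵥ c = QM.mulVec v (Sum.inr (Sum.inl ())) := by
    intro v
    rw [← Matrix.mulVec_mulVec]
    exact ABC14.dualMain hL x r hn hcount' heqvar hσ _ ((hQMnull _).mpr ⟨v, rfl⟩)
  have h1 := ABC14.covFactor_diag (designMain x r) QM (Sum.inr (Sum.inl ())) hGramM c wM hcM hdM
  obtain ⟨wC, hwC⟩ := (hQnull _).mp (ABC14.thetaStarC_constr x r hn hcount' lam)
  have hcC : c = (designCat x r * Q).mulVec wC := by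
    rw [← Matrix.mulVec_mulVec, ← hwC, ABC14.thetaStarC_design]
  have hdC : ∀ v : Fin d → ℝ,
      ((designCat x r * Q).mulVec v) ⬝ᵥ c = Q.mulVec v (Sum.inl (Sum.inr (Sum.inl ()))) := by
    intro v
    rw [← Matrix.mulVec_mulVec]
    exact ABC14.dualCat hL x r hn hcount' heqvar hσ _ ((hQnull _).mpr ⟨v, rfl⟩)
  have h2 := ABC14.covFactor_diag (designCat x r) Q (Sum.inl (Sum.inr (Sum.inl ()))) hGram c wC hcC hdC
  refine ⟨by rw [h1, h2], ?_⟩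
  intro SM S hSM hS
  rw [h1, h2]
  field_simp

end
end
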